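/- Let h₊, h₋ ∈ ℂ and let h : ℝ → ℂ satisfy h(1) = h₊ and h(−1) = h₋. Almost surely, for every n ∈ ℤ, the limit lim_{N→∞} (1/(2N+1)) · Σ_{m=-N}^{N} conj(h(v_m)) · h(v_{m+n}) exists and equals (|h₊ + h₋|² + |h₊|² − |h₋|²)/4 + (|h₊ − h₋|²/4) · η_Y(n), where η_Y(0) = 1, η_Y(n) = 1/2 for even n ≠ 0, and η_Y(n) = 0 for odd n. -/

import Mathlib

open MeasureTheory ProbabilityTheory Filter Finset
open scoped symmDiff

/-- bound abs of sum by card -/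
lemma DMS.abs_sum_le_card (u : ℤ → ℝ) (hb : ∀ k, |u k| ≤ 1) (s : Finset ℤ) :
    |∑ k ∈ s, u k| ≤ (s.card : ℝ) := by
  calc |∑ k ∈ s, u k| ≤ ∑ k ∈ s, |u k| := Finset.abs_sum_le_sum_abs _ _
    _ ≤ ∑ k ∈ s, 1 := Finset.sum_le_sum fun k _ => hb k
    _ = s.card := by simp

lemma DMS.sum_sub_sum_bound (u : ℤ → ℝ) (hb : ∀ k, |u k| ≤ 1) (s t : Finset ℤ) :
    |∑ k ∈ s, u k - ∑ k ∈ t, u k| ≤ ((s \ t).card : ℝ) + ((t \ s).card : ℝ) := by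
  have h1 := Finset.sum_inter_add_sum_sdiff s t u
  have h2 := Finset.sum_inter_add_sum_sdiff t s u
  rw [Finset.inter_comm] at h2
  have : ∑ k ∈ s, u k - ∑ k ∈ t, u k = ∑ k ∈ s \ t, u k - ∑ k ∈ t \ s, u k := by
    rw [← h1, ← h2]; ring
  rw [this]
  calc |∑ k ∈ s \ t, u k - ∑ k ∈ t \ s, u k|
      ≤ |∑ k ∈ s \ t, u k| + |∑ k ∈ t \ s, u k| := abs_sub _ _
    _ ≤ _ := add_le_add (DMS.abs_sum_le_card u hb _) (DMS.abs_sum_le_card u hb _)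

/-- shifting the argument by `c` does not change the symmetric Cesàro limit. -/
lemma DMS.shift_avg (u : ℤ → ℝ) (hb : ∀ k, |u k| ≤ 1) (L : ℝ)
    (hL : Tendsto (fun K : ℕ => (∑ k ∈ Finset.Icc (-(K:ℤ)) K, u k) / (2*(K:ℝ)+1))
      atTop (nhds L)) (c : ℤ) :
    Tendsto (fun K : ℕ => (∑ k ∈ Finset.Icc (-(K:ℤ)) K, u (k + c)) / (2*(K:ℝ)+1))
      atTop (nhds L) := by
  have key : ∀ K : ℕ, |∑ k ∈ Finset.Icc (-(K:ℤ)) K, u (k + c)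
      - ∑ k ∈ Finset.Icc (-(K:ℤ)) K, u k| ≤ 2 * |(c:ℝ)| := by
    intro K
    have hre : ∑ k ∈ Finset.Icc (-(K:ℤ)) K, u (k + c)
        = ∑ k ∈ Finset.Icc (-(K:ℤ)+c) ((K:ℤ)+c), u k := by
      rw [← Finset.map_add_right_Icc]
      rw [Finset.sum_map]
      rfl
    rw [hre]
    refine le_trans (DMS.sum_sub_sum_bound u hb _ _) ?_
    have hc1 : ((Finset.Icc (-(K:ℤ)+c) ((K:ℤ)+c) \ Finset.Icc (-(K:ℤ)) K).card : ℝ) ≤ |(c:ℝ)| := by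
      rcases le_or_gt 0 c with hc | hc
      · have hsub : Finset.Icc (-(K:ℤ)+c) ((K:ℤ)+c) \ Finset.Icc (-(K:ℤ)) K
            ⊆ Finset.Icc ((K:ℤ)+1) ((K:ℤ)+c) := by
          intro m hm
          simp only [Finset.mem_sdiff, Finset.mem_Icc, not_and, not_le] at hm
          simp only [Finset.mem_Icc]
          omega
        have := Finset.card_le_card hsub
        have hcard : (Finset.Icc ((K:ℤ)+1) ((K:ℤ)+c)).card = c.toNat := by
          rw [Int.card_Icc]; omega
        rw [hcard] at this
        calc ((Finset.Icc (-(K:ℤ)+c) ((K:ℤ)+c) \ Finset.Icc (-(K:ℤ)) K).card : ℝ)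
            ≤ (c.toNat : ℝ) := by exact_mod_cast this
          _ ≤ |(c:ℝ)| := by
              exact_mod_cast (by rw [Int.abs_eq_natAbs]; omega : ((c.toNat:ℤ)) ≤ |c|)
      · have hsub : Finset.Icc (-(K:ℤ)+c) ((K:ℤ)+c) \ Finset.Icc (-(K:ℤ)) K
            ⊆ Finset.Icc (-(K:ℤ)+c) (-(K:ℤ)-1) := by
          intro m hm
          simp only [Finset.mem_sdiff, Finset.mem_Icc, not_and, not_le] at hm
          simp only [Finset.mem_Icc]
          omega
        have := Finset.card_le_card hsub
        have hcard : (Finset.Icc (-(K:ℤ)+c) (-(K:ℤ)-1)).card = (-c).toNat := by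
          rw [Int.card_Icc]; omega
        rw [hcard] at this
        calc ((Finset.Icc (-(K:ℤ)+c) ((K:ℤ)+c) \ Finset.Icc (-(K:ℤ)) K).card : ℝ)
            ≤ ((-c).toNat : ℝ) := by exact_mod_cast this
          _ ≤ |(c:ℝ)| := by
              exact_mod_cast (by rw [Int.abs_eq_natAbs]; omega : (((-c).toNat:ℤ)) ≤ |c|)
    have hc2 : ((Finset.Icc (-(K:ℤ)) (K:ℤ) \ Finset.Icc (-(K:ℤ)+c) ((K:ℤ)+c)).card : ℝ) ≤ |(c:ℝ)| := by
      rcases le_or_gt 0 c with hc | hc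
      · have hsub : Finset.Icc (-(K:ℤ)) (K:ℤ) \ Finset.Icc (-(K:ℤ)+c) ((K:ℤ)+c)
            ⊆ Finset.Icc (-(K:ℤ)) (-(K:ℤ)+c-1) := by
          intro m hm
          simp only [Finset.mem_sdiff, Finset.mem_Icc, not_and, not_le] at hm
          simp only [Finset.mem_Icc]
          omega
        have := Finset.card_le_card hsub
        have hcard : (Finset.Icc (-(K:ℤ)) (-(K:ℤ)+c-1)).card = c.toNat := by
          rw [Int.card_Icc]; omega
        rw [hcard] at this
        calc ((Finset.Icc (-(K:ℤ)) (K:ℤ) \ Finset.Icc (-(K:ℤ)+c) ((K:ℤ)+c)).card : ℝ)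
            ≤ (c.toNat : ℝ) := by exact_mod_cast this
          _ ≤ |(c:ℝ)| := by
              exact_mod_cast (by rw [Int.abs_eq_natAbs]; omega : ((c.toNat:ℤ)) ≤ |c|)
      · have hsub : Finset.Icc (-(K:ℤ)) (K:ℤ) \ Finset.Icc (-(K:ℤ)+c) ((K:ℤ)+c)
            ⊆ Finset.Icc ((K:ℤ)+c+1) (K:ℤ) := by
          intro m hm
          simp only [Finset.mem_sdiff, Finset.mem_Icc, not_and, not_le] at hm
          simp only [Finset.mem_Icc]
          omega
        have := Finset.card_le_card hsub
        have hcard : (Finset.Icc ((K:ℤ)+c+1) (K:ℤ)).card = (-c).toNat := by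
          rw [Int.card_Icc]; omega
        rw [hcard] at this
        calc ((Finset.Icc (-(K:ℤ)) (K:ℤ) \ Finset.Icc (-(K:ℤ)+c) ((K:ℤ)+c)).card : ℝ)
            ≤ ((-c).toNat : ℝ) := by exact_mod_cast this
          _ ≤ |(c:ℝ)| := by
              exact_mod_cast (by rw [Int.abs_eq_natAbs]; omega : (((-c).toNat:ℤ)) ≤ |c|)
    linarith
  have hdiff : Tendsto (fun K : ℕ =>
      (∑ k ∈ Finset.Icc (-(K:ℤ)) K, u (k + c) - ∑ k ∈ Finset.Icc (-(K:ℤ)) K, u k)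
        / (2*(K:ℝ)+1)) atTop (nhds 0) := by
    apply squeeze_zero_norm (a := fun K : ℕ => 2*|(c:ℝ)| / (2*(K:ℝ)+1))
    · intro K
      rw [Real.norm_eq_abs, abs_div]
      have hpos : (0:ℝ) < 2*(K:ℝ)+1 := by positivity
      rw [abs_of_pos hpos]
      exact div_le_div_of_nonneg_right (key K) hpos.le |>.trans_eq rfl
    · have := tendsto_natCast_atTop_atTop (R := ℝ)
      apply Tendsto.div_atTop (tendsto_const_nhds)
      exact Tendsto.atTop_add (this.const_mul_atTop (by norm_num)) tendsto_const_nhds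
  have := hL.add hdiff
  rw [add_zero] at this
  refine this.congr fun K => ?_
  ring

/-- even/odd block decomposition of a symmetric-interval sum -/
lemma DMS.block_sum (F : ℤ → ℂ) (K : ℕ) :
    ∑ m ∈ Finset.Icc (-(2*(K:ℤ))) (2*(K:ℤ)+1), F m
      = ∑ k ∈ Finset.Icc (-(K:ℤ)) (K:ℤ), (F (2*k) + F (2*k+1)) := by
  classical
  have hE : ∀ s : Finset ℤ, ∑ k ∈ s, F (2*k) = ∑ m ∈ s.image (fun k => 2*k), F m := by
    intro s
    rw [Finset.sum_image (by intro a _ b _ h; simp only at h; omega)]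
  have hO : ∀ s : Finset ℤ, ∑ k ∈ s, F (2*k+1) = ∑ m ∈ s.image (fun k => 2*k+1), F m := by
    intro s
    rw [Finset.sum_image (by intro a _ b _ h; simp only at h; omega)]
  rw [Finset.sum_add_distrib, hE, hO, ← Finset.sum_union]
  · apply Finset.sum_congr _ (fun _ _ => rfl)
    ext m
    simp only [Finset.mem_union, Finset.mem_image, Finset.mem_Icc]
    constructor
    · intro hm
      rcases Int.even_or_odd m with ⟨k, hk⟩ | ⟨k, hk⟩
      · refine Or.inl ⟨k, ?_⟩; omega
      · refine Or.inr ⟨k, ?_⟩; omega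
    · rintro (⟨k, hk⟩ | ⟨k, hk⟩) <;> omega
  · simp only [Finset.disjoint_left, Finset.mem_image]
    rintro m ⟨k, _, rfl⟩ ⟨k', _, h⟩
    omega

private lemma DMS.alg (X T A SB SC SD : ℂ) (h : X ≠ 0) (hT : T = X*A + SB + SC + SD) :
    1/X * T = A + SB/X + SC/X + SD/X := by
  subst hT; field_simp

/-- main combinator -/
lemma DMS.comb3 (p q r : ℤ → ℝ)
    (hp : Tendsto (fun K : ℕ => (∑ k ∈ Finset.Icc (-(K:ℤ)) K, p k) / (2*(K:ℝ)+1)) atTop (nhds 0))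
    (hq : Tendsto (fun K : ℕ => (∑ k ∈ Finset.Icc (-(K:ℤ)) K, q k) / (2*(K:ℝ)+1)) atTop (nhds 0))
    (hr : Tendsto (fun K : ℕ => (∑ k ∈ Finset.Icc (-(K:ℤ)) K, r k) / (2*(K:ℝ)+1)) atTop (nhds 0))
    (A B C D : ℂ) :
    Tendsto (fun K : ℕ => (1/(2*(K:ℝ)+1) : ℂ) *
        ∑ k ∈ Finset.Icc (-(K:ℤ)) K, (A + B * (p k : ℂ) + C * (q k : ℂ) + D * (r k : ℂ)))
      atTop (nhds A) := by
  have cf : Continuous (Complex.ofReal) := Complex.continuous_ofReal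
  have hcast : ∀ u : ℤ → ℝ, ∀ K : ℕ,
      (((∑ k ∈ Finset.Icc (-(K:ℤ)) K, u k) / (2*(K:ℝ)+1) : ℝ) : ℂ)
        = (∑ k ∈ Finset.Icc (-(K:ℤ)) K, (u k : ℂ)) / (2*((K:ℝ):ℂ)+1) := by
    intro u K; push_cast; ring
  have key : ∀ K : ℕ, (1/(2*(K:ℝ)+1) : ℂ) *
        ∑ k ∈ Finset.Icc (-(K:ℤ)) K, (A + B * (p k : ℂ) + C * (q k : ℂ) + D * (r k : ℂ))
      = A + B * (((∑ k ∈ Finset.Icc (-(K:ℤ)) K, p k) / (2*(K:ℝ)+1) : ℝ) : ℂ)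
          + C * (((∑ k ∈ Finset.Icc (-(K:ℤ)) K, q k) / (2*(K:ℝ)+1) : ℝ) : ℂ)
          + D * (((∑ k ∈ Finset.Icc (-(K:ℤ)) K, r k) / (2*(K:ℝ)+1) : ℝ) : ℂ) := by
    intro K
    have hne : (2*((K:ℝ):ℂ)+1) ≠ 0 := by
      intro hcon
      have := congrArg Complex.re hcon
      simp [Complex.ofReal_re] at this
      nlinarith [Nat.cast_nonneg (α := ℝ) K, this]
    rw [hcast p, hcast q, hcast r]
    have hcard : ((Finset.Icc (-(K:ℤ)) K).card : ℂ) = 2*((K:ℝ):ℂ)+1 := by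
      rw [Int.card_Icc]
      have : ((K:ℤ) + 1 - -(K:ℤ)).toNat = 2*K+1 := by omega
      rw [this]; push_cast; ring
    rw [Finset.sum_add_distrib, Finset.sum_add_distrib, Finset.sum_add_distrib,
      Finset.sum_const, ← Finset.mul_sum, ← Finset.mul_sum, ← Finset.mul_sum,
      nsmul_eq_mul, hcard]
    rw [mul_div_assoc' B, mul_div_assoc' C, mul_div_assoc' D]
    exact DMS.alg _ _ A _ _ _ hne (by ring)
  have hp' : Tendsto (fun K : ℕ =>
      (((∑ k ∈ Finset.Icc (-(K:ℤ)) K, p k) / (2*(K:ℝ)+1) : ℝ) : ℂ)) atTop (nhds 0) := by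
    have := (cf.tendsto 0).comp hp
    rw [Complex.ofReal_zero] at this
    exact this
  have hq' : Tendsto (fun K : ℕ =>
      (((∑ k ∈ Finset.Icc (-(K:ℤ)) K, q k) / (2*(K:ℝ)+1) : ℝ) : ℂ)) atTop (nhds 0) := by
    have := (cf.tendsto 0).comp hq
    rw [Complex.ofReal_zero] at this
    exact this
  have hr' : Tendsto (fun K : ℕ =>
      (((∑ k ∈ Finset.Icc (-(K:ℤ)) K, r k) / (2*(K:ℝ)+1) : ℝ) : ℂ)) atTop (nhds 0) := by
    have := (cf.tendsto 0).comp hr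
    rw [Complex.ofReal_zero] at this
    exact this
  have H := ((tendsto_const_nhds (x := A) (f := atTop (α := ℕ))).add
      (hp'.const_mul B)).add (hq'.const_mul C) |>.add (hr'.const_mul D)
  simp only [mul_zero, add_zero] at H
  exact H.congr fun K => (key K).symm

/-- `N/2`-ratio tends to 1/2 -/
lemma DMS.ratio_tendsto :
    Tendsto (fun N : ℕ => ((2*((N/2 : ℕ):ℝ)+1) / (2*(N:ℝ)+1) : ℝ)) atTop (nhds (1/2)) := by
  rw [show (1/2 : ℝ) = 1/2 + 0 by ring]
  have h1 : Tendsto (fun N : ℕ => ((2*((N/2 : ℕ):ℝ)+1) / (2*(N:ℝ)+1) - 1/2 : ℝ)) atTop (nhds 0) := by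
    apply squeeze_zero_norm (a := fun N : ℕ => 1/(2*(N:ℝ)+1))
    · intro N
      have hpos : (0:ℝ) < 2*(N:ℝ)+1 := by positivity
      rw [Real.norm_eq_abs]
      rw [div_sub_div _ _ (ne_of_gt hpos) (by norm_num : (2:ℝ) ≠ 0), abs_div]
      rw [abs_of_pos (by positivity : (0:ℝ) < (2*(N:ℝ)+1)*2)]
      have hnum : |(2*((N/2 : ℕ):ℝ)+1) * 2 - (2*(N:ℝ)+1) * 1| = 1 := by
        have h2 : 2*(N/2 : ℕ) = N ∨ 2*(N/2 : ℕ) + 1 = N := by omega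
        rcases h2 with hN | hN
        · have hNr : 2*((N/2:ℕ):ℝ) = (N:ℝ) := by exact_mod_cast hN
          rw [show (2*((N/2 : ℕ):ℝ)+1) * 2 - (2*(N:ℝ)+1) * 1
              = (2*((N/2:ℕ):ℝ)) * 2 - 2*(N:ℝ) + 1 by ring, hNr,
            show (N:ℝ)*2 - 2*(N:ℝ) + 1 = 1 by ring]
          norm_num
        · have hNr : 2*((N/2:ℕ):ℝ) + 1 = (N:ℝ) := by exact_mod_cast hN
          rw [hNr, show ((N:ℝ))*2 - (2*(N:ℝ)+1)*1 = -1 by ring]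
          norm_num
      rw [hnum]
      rw [div_le_div_iff₀ (by positivity) hpos]
      nlinarith [hpos]
    · apply Tendsto.div_atTop tendsto_const_nhds
      exact Tendsto.atTop_add ((tendsto_natCast_atTop_atTop (R := ℝ)).const_mul_atTop (by norm_num))
        tendsto_const_nhds
  have := (tendsto_const_nhds (x := (1/2:ℝ)) (f := atTop (α := ℕ))).add h1
  refine this.congr fun N => by ring

lemma DMS.div2_atTop : Tendsto (fun N : ℕ => N / 2) atTop atTop := by
  apply tendsto_atTop_atTop.2
  intro b
  exact ⟨2*b, fun a ha => by omega⟩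

lemma DMS.glue (F : ℤ → ℂ) (C : ℝ) (hFb : ∀ m, ‖F m‖ ≤ C) (L : ℂ)
    (hA : Tendsto (fun K : ℕ => (1/(2*(K:ℝ)+1) : ℂ) *
        ∑ k ∈ Finset.Icc (-(K:ℤ)) K, (F (2*k) + F (2*k+1))) atTop (nhds (2*L))) :
    Tendsto (fun N : ℕ => (1/(2*(N:ℝ)+1) : ℂ) * ∑ m ∈ Finset.Icc (-(N:ℤ)) N, F m)
      atTop (nhds L) := by
  set SB : ℕ → ℂ := fun K => ∑ k ∈ Finset.Icc (-(K:ℤ)) K, (F (2*k) + F (2*k+1)) with hSB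
  have hBS : ∀ K : ℕ, SB K = ∑ m ∈ Finset.Icc (-(2*(K:ℤ))) (2*(K:ℤ)+1), F m :=
    fun K => (DMS.block_sum F K).symm
  set r : ℕ → ℂ := fun N => (∑ m ∈ Finset.Icc (-(N:ℤ)) N, F m) - SB (N/2) with hrdef
  have hr : ∀ N, ‖r N‖ ≤ C := by
    intro N
    set K := N / 2 with hK
    have h2 : 2*K = N ∨ 2*K + 1 = N := by omega
    rcases h2 with hN | hN
    · have hIcc : Finset.Icc (-(2*(K:ℤ))) (2*(K:ℤ)+1)
          = insert (2*(K:ℤ)+1) (Finset.Icc (-(N:ℤ)) (N:ℤ)) := by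
        ext m
        simp only [Finset.mem_insert, Finset.mem_Icc]
        omega
      have : SB K = F (2*(K:ℤ)+1) + ∑ m ∈ Finset.Icc (-(N:ℤ)) N, F m := by
        rw [hBS, hIcc, Finset.sum_insert (by simp only [Finset.mem_Icc]; omega)]
      have hrN : r N = - F (2*(K:ℤ)+1) := by
        rw [hrdef]; simp only []; rw [← hK, this]; ring
      rw [hrN, norm_neg]; exact hFb _
    · have hIcc : Finset.Icc (-(N:ℤ)) (N:ℤ)
          = insert (-(N:ℤ)) (Finset.Icc (-(2*(K:ℤ))) (2*(K:ℤ)+1)) := by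
        ext m
        simp only [Finset.mem_insert, Finset.mem_Icc]
        omega
      have : ∑ m ∈ Finset.Icc (-(N:ℤ)) N, F m
          = F (-(N:ℤ)) + ∑ m ∈ Finset.Icc (-(2*(K:ℤ))) (2*(K:ℤ)+1), F m := by
        rw [hIcc, Finset.sum_insert (by simp only [Finset.mem_Icc]; omega)]
      have hrN : r N = F (-(N:ℤ)) := by
        rw [hrdef]; simp only []; rw [← hK, hBS, this]; ring
      rw [hrN]; exact hFb _
  have key : ∀ N : ℕ, (1/(2*(N:ℝ)+1) : ℂ) * ∑ m ∈ Finset.Icc (-(N:ℤ)) N, F m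
      = (((2*((N/2 : ℕ):ℝ)+1) / (2*(N:ℝ)+1) : ℝ) : ℂ)
          * ((1/(2*((N/2:ℕ):ℝ)+1) : ℂ) * SB (N/2)) + (1/(2*(N:ℝ)+1) : ℂ) * r N := by
    intro N
    have hsum : ∑ m ∈ Finset.Icc (-(N:ℤ)) N, F m = SB (N/2) + r N := by
      rw [hrdef]; ring
    rw [hsum]
    have hne1 : (2*(((N/2:ℕ)):ℂ)+1) ≠ 0 := by
      have : ((2*(N/2:ℕ)+1 : ℕ) : ℂ) ≠ 0 := Nat.cast_ne_zero.2 (by omega)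
      push_cast at this
      convert this using 2 <;> push_cast <;> ring
    have hne2 : (2*((N:ℕ):ℂ)+1) ≠ 0 := by
      have : ((2*N+1 : ℕ) : ℂ) ≠ 0 := Nat.cast_ne_zero.2 (by omega)
      push_cast at this
      convert this using 2 <;> push_cast <;> ring
    push_cast
    field_simp
  refine Tendsto.congr (fun N => (key N).symm) ?_
  have h1 : Tendsto (fun N : ℕ =>
      (((2*((N/2 : ℕ):ℝ)+1) / (2*(N:ℝ)+1) : ℝ) : ℂ)) atTop (nhds ((1/2 : ℝ) : ℂ)) :=
    (Complex.continuous_ofReal.tendsto _).comp DMS.ratio_tendsto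
  have h2 : Tendsto (fun N : ℕ => (1/(2*((N/2:ℕ):ℝ)+1) : ℂ) * SB (N/2)) atTop (nhds (2*L)) :=
    hA.comp DMS.div2_atTop
  have h3 : Tendsto (fun N : ℕ => (1/(2*(N:ℝ)+1) : ℂ) * r N) atTop (nhds 0) := by
    apply squeeze_zero_norm (a := fun N : ℕ => C / (2*(N:ℝ)+1))
    · intro N
      rw [norm_mul, norm_div, norm_one]
      have hpos : (0:ℝ) < 2*(N:ℝ)+1 := by positivity
      have hnorm : ‖((2*(N:ℝ)+1 : ℝ) : ℂ)‖ = 2*(N:ℝ)+1 := by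
        rw [Complex.norm_real, Real.norm_eq_abs, abs_of_pos hpos]
      have hcast : (2*(((N:ℝ)):ℂ)+1) = ((2*(N:ℝ)+1 : ℝ) : ℂ) := by push_cast; ring
      rw [hcast, hnorm, div_mul_eq_mul_div, one_mul, div_le_div_iff₀ (by positivity) hpos]
      have := hr N
      nlinarith [norm_nonneg (r N), hpos]
    · apply Tendsto.div_atTop tendsto_const_nhds
      exact Tendsto.atTop_add ((tendsto_natCast_atTop_atTop (R := ℝ)).const_mul_atTop (by norm_num))
        tendsto_const_nhds
  have := (h1.mul h2).add h3
  rw [add_zero] at this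
  convert this using 2
  push_cast
  ring

lemma DMS.det_main (x : ℤ → ℝ) (hx : ∀ k, x k = 1 ∨ x k = -1)
    (hcore : ∀ t : Finset ℤ, t.Nonempty →
      Tendsto (fun K : ℕ => (∑ k ∈ Finset.Icc (-(K:ℤ)) K, ∏ j ∈ t, x (k + j)) / (2*(K:ℝ)+1))
        atTop (nhds 0))
    (V : ℤ → ℝ) (hVe : ∀ k : ℤ, V (2*k) = 1) (hVo : ∀ k : ℤ, V (2*k+1) = x k * x (k+1))
    (hp hm : ℂ) (h : ℝ → ℂ) (hh1 : h 1 = hp) (hhm1 : h (-1) = hm)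
    (ηY : ℤ → ℝ) (hηY0 : ηY 0 = 1)
    (hηYeven : ∀ n : ℤ, n ≠ 0 → Even n → ηY n = 1/2)
    (hηYodd : ∀ n : ℤ, Odd n → ηY n = 0) (n : ℤ) :
    Tendsto (fun N : ℕ =>
        (1 / (2*(N:ℝ)+1) : ℂ) *
          ∑ m ∈ Finset.Icc (-(N:ℤ)) (N:ℤ),
            (starRingEnd ℂ) (h (V m)) * h (V (m+n)))
      atTop
      (nhds ((((‖hp + hm‖)^2 + (‖hp‖)^2
          - (‖hm‖)^2) / 4 : ℂ)
        + ((‖hp - hm‖)^2 / 4) * (ηY n : ℂ))) := by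
  classical
  -- abbreviations
  obtain ⟨a, ha⟩ : ∃ a : ℂ, a = (hp + hm)/2 := ⟨_, rfl⟩
  obtain ⟨b, hb⟩ : ∃ b : ℂ, b = (hp - hm)/2 := ⟨_, rfl⟩
  obtain ⟨ca, hca⟩ : ∃ ca : ℂ, ca = (starRingEnd ℂ) a := ⟨_, rfl⟩
  obtain ⟨cb, hcb⟩ : ∃ cb : ℂ, cb = (starRingEnd ℂ) b := ⟨_, rfl⟩
  -- the limit value
  set L : ℂ := (((‖hp + hm‖)^2 + (‖hp‖)^2
      - (‖hm‖)^2) / 4 : ℂ) + ((‖hp - hm‖)^2 / 4) * (ηY n : ℂ) with hL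
  have sqa : ∀ z : ℂ, ((‖z‖ : ℂ))^2 = z * (starRingEnd ℂ) z := by
    intro z
    rw [← Complex.ofReal_pow, Complex.sq_norm, Complex.mul_conj]
  have hLval : L = ca*a + (cb*a + ca*b)/2 + (cb*b) * ((ηY n : ℝ) : ℂ) := by
    rw [hL, hca, hcb, sqa, sqa, sqa, sqa, ha, hb]
    simp only [map_div₀, map_add, map_sub, Complex.conj_ofNat]
    ring
  -- the sequence ξ
  set ξ : ℤ → ℝ := fun k => x k * x (k+1) with hξdef
  have hξpm : ∀ k, ξ k = 1 ∨ ξ k = -1 := by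
    intro k
    rcases hx k with h1 | h1 <;> rcases hx (k+1) with h2 | h2 <;>
      simp [hξdef, h1, h2]
  have hξb : ∀ k, |ξ k| ≤ 1 := by
    intro k; rcases hξpm k with h1 | h1 <;> rw [h1] <;> norm_num
  have hVo' : ∀ k : ℤ, V (2*k+1) = ξ k := fun k => hVo k
  have hVpm : ∀ m, V m = 1 ∨ V m = -1 := by
    intro m
    rcases Int.even_or_odd m with ⟨k, hk⟩ | ⟨k, hk⟩
    · rw [show m = 2*k by omega, hVe]; left; rfl
    · rw [show m = 2*k+1 by omega, hVo]; exact hξpm k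
  -- values of h on V
  have hhV : ∀ m, h (V m) = a + b * ((V m : ℝ) : ℂ) := by
    intro m
    rcases hVpm m with h1 | h1 <;> rw [h1]
    · rw [hh1]; push_cast; rw [ha, hb]; ring
    · rw [hhm1]; push_cast; rw [ha, hb]; ring
  -- the correlation sequence
  set F : ℤ → ℂ := fun m => (starRingEnd ℂ) (h (V m)) * h (V (m+n)) with hFdef
  have hF : ∀ m, F m = (ca + cb * ((V m : ℝ) : ℂ)) * (a + b * ((V (m+n) : ℝ) : ℂ)) := by
    intro m
    rw [hFdef]
    simp only []
    rw [hhV m, hhV (m+n), map_add, map_mul, Complex.conj_ofReal, hca, hcb]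
  have hFb : ∀ m, ‖F m‖ ≤ (‖a‖ + ‖b‖)^2 := by
    intro m
    have hnV : ∀ m', ‖((V m' : ℝ) : ℂ)‖ = 1 := by
      intro m'
      rw [Complex.norm_real, Real.norm_eq_abs]
      rcases hVpm m' with h1 | h1 <;> rw [h1] <;> norm_num
    rw [hF m, norm_mul]
    have h1 : ‖ca + cb * ((V m : ℝ) : ℂ)‖ ≤ ‖a‖ + ‖b‖ := by
      refine le_trans (norm_add_le _ _) ?_
      rw [norm_mul, hnV, mul_one, hca, hcb, RCLike.norm_conj, RCLike.norm_conj]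
    have h2 : ‖a + b * ((V (m+n) : ℝ) : ℂ)‖ ≤ ‖a‖ + ‖b‖ := by
      refine le_trans (norm_add_le _ _) ?_
      rw [norm_mul, hnV, mul_one]
    calc ‖ca + cb * ((V m : ℝ) : ℂ)‖ * ‖a + b * ((V (m+n) : ℝ) : ℂ)‖
        ≤ (‖a‖ + ‖b‖) * (‖a‖ + ‖b‖) :=
          mul_le_mul h1 h2 (norm_nonneg _) (by positivity)
      _ = (‖a‖ + ‖b‖)^2 := by ring
  -- averaged limits of ξ
  have hcs : ∀ c : ℤ, Tendsto (fun K : ℕ =>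
      (∑ k ∈ Finset.Icc (-(K:ℤ)) K, ξ (k + c)) / (2*(K:ℝ)+1)) atTop (nhds 0) := by
    intro c
    have hbase := hcore {0, 1} ⟨0, by simp⟩
    have hpt : ∀ k : ℤ, (∏ j ∈ ({0, 1} : Finset ℤ), x (k + j)) = ξ k := by
      intro k
      rw [Finset.prod_pair (by norm_num : (0:ℤ) ≠ 1)]
      rw [hξdef]; simp
    have hbase' : Tendsto (fun K : ℕ =>
        (∑ k ∈ Finset.Icc (-(K:ℤ)) K, ξ k) / (2*(K:ℝ)+1)) atTop (nhds 0) := by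
      refine hbase.congr fun K => ?_
      rw [Finset.sum_congr rfl fun k _ => hpt k]
    exact DMS.shift_avg ξ hξb 0 hbase' c
  have hξavg : Tendsto (fun K : ℕ =>
      (∑ k ∈ Finset.Icc (-(K:ℤ)) K, ξ k) / (2*(K:ℝ)+1)) atTop (nhds 0) := by
    refine (hcs 0).congr fun K => ?_
    rw [Finset.sum_congr rfl fun k _ => by rw [add_zero]]
  -- averaged limits of products ξ·ξ(·+d)
  have hpos : ∀ d : ℤ, 1 ≤ d → ∀ c : ℤ, Tendsto (fun K : ℕ =>
      (∑ k ∈ Finset.Icc (-(K:ℤ)) K, ξ (k+c) * ξ (k+c+d)) / (2*(K:ℝ)+1)) atTop (nhds 0) := by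
    intro d hd c
    set w : ℤ → ℝ := fun k => ξ k * ξ (k+d) with hwdef
    have hwpm : ∀ k, w k = 1 ∨ w k = -1 := by
      intro k
      rcases hξpm k with h1 | h1 <;> rcases hξpm (k+d) with h2 | h2 <;>
        simp [hwdef, h1, h2]
    have hwb : ∀ k, |w k| ≤ 1 := by
      intro k; rcases hwpm k with h1 | h1 <;> rw [h1] <;> norm_num
    have hbase : Tendsto (fun K : ℕ =>
        (∑ k ∈ Finset.Icc (-(K:ℤ)) K, w k) / (2*(K:ℝ)+1)) atTop (nhds 0) := by
      by_cases hd1 : d = 1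
      · subst hd1
        have hbase0 := hcore {0, 2} ⟨0, by simp⟩
        have hpt : ∀ k : ℤ, (∏ j ∈ ({0, 2} : Finset ℤ), x (k + j)) = w k := by
          intro k
          rw [Finset.prod_pair (by norm_num : (0:ℤ) ≠ 2)]
          have e : k + 1 + 1 = k + 2 := by ring
          have h2 : x (k+1) * x (k+1) = 1 := by
            rcases hx (k+1) with h1 | h1 <;> rw [h1] <;> norm_num
          have : w k = (x (k+1) * x (k+1)) * (x k * x (k+1+1)) := by
            rw [hwdef]; simp only [hξdef]; ring
          rw [this, h2, e]; ring
        refine hbase0.congr fun K => ?_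
        rw [Finset.sum_congr rfl fun k _ => hpt k]
      · have hd2 : 2 ≤ d := by omega
        have hbase0 := hcore {0, 1, d, d+1} ⟨0, by simp⟩
        have hpt : ∀ k : ℤ, (∏ j ∈ ({0, 1, d, d+1} : Finset ℤ), x (k + j)) = w k := by
          intro k
          have h0 : (0:ℤ) ∉ ({1, d, d+1} : Finset ℤ) := by
            simp only [Finset.mem_insert, Finset.mem_singleton]; omega
          have h1 : (1:ℤ) ∉ ({d, d+1} : Finset ℤ) := by
            simp only [Finset.mem_insert, Finset.mem_singleton]; omega
          have h2 : d ∉ ({d+1} : Finset ℤ) := by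
            simp only [Finset.mem_singleton]; omega
          rw [show ({0, 1, d, d+1} : Finset ℤ)
              = insert 0 (insert 1 (insert d ({d+1} : Finset ℤ))) from rfl]
          rw [Finset.prod_insert h0, Finset.prod_insert h1, Finset.prod_insert h2,
            Finset.prod_singleton]
          have e1 : k + (d+1) = k + d + 1 := by ring
          rw [e1, add_zero]
          rw [hwdef]; simp only [hξdef]; ring
        refine hbase0.congr fun K => ?_
        rw [Finset.sum_congr rfl fun k _ => hpt k]
    exact DMS.shift_avg w hwb 0 hbase c
  have hpp : ∀ d : ℤ, d ≠ 0 → Tendsto (fun K : ℕ =>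
      (∑ k ∈ Finset.Icc (-(K:ℤ)) K, ξ k * ξ (k+d)) / (2*(K:ℝ)+1)) atTop (nhds 0) := by
    intro d hd
    rcases le_or_gt 1 d with hd1 | hd1
    · refine (hpos d hd1 0).congr fun K => ?_
      congr 1
      refine Finset.sum_congr rfl fun k _ => ?_
      rw [add_zero]
    · have hd2 : 1 ≤ -d := by omega
      refine (hpos (-d) hd2 d).congr fun K => ?_
      congr 1
      refine Finset.sum_congr rfl fun k _ => ?_
      rw [show k + d + -d = k by ring]
      ring
  -- now case analysis on n
  rcases Int.even_or_odd n with ⟨d, hd⟩ | ⟨e, he⟩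
  · by_cases hd0 : d = 0
    · -- n = 0
      have hn0 : n = 0 := by omega
      have hG : ∀ k : ℤ, F (2*k) + F (2*k+1)
          = ((ca+cb)*(a+b) + ca*a + cb*b) + (cb*a + ca*b) * ((ξ k : ℝ):ℂ)
            + 0 * ((ξ k : ℝ):ℂ) + 0 * ((ξ k : ℝ):ℂ) := by
        intro k
        have hsq : ((ξ k : ℝ):ℂ) * ((ξ k : ℝ):ℂ) = 1 := by
          rcases hξpm k with h1 | h1 <;> rw [h1] <;> norm_num
        rw [hF (2*k), hF (2*k+1), show 2*k + n = 2*k by omega,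
          show 2*k+1+n = 2*k+1 by omega, hVe, hVo']
        push_cast
        linear_combination (cb * b) * hsq
      have hstep := DMS.comb3 ξ ξ ξ hξavg hξavg hξavg
        ((ca+cb)*(a+b) + ca*a + cb*b) (cb*a + ca*b) 0 0
      have hAeq : (ca+cb)*(a+b) + ca*a + cb*b = 2 * L := by
        rw [hLval, hn0, hηY0]
        push_cast
        ring
      have hstepF : Tendsto (fun K : ℕ => (1/(2*(K:ℝ)+1) : ℂ) *
          ∑ k ∈ Finset.Icc (-(K:ℤ)) K, (F (2*k) + F (2*k+1))) atTop
          (nhds ((ca+cb)*(a+b) + ca*a + cb*b)) := by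
        refine hstep.congr fun K => ?_
        congr 1
        exact Finset.sum_congr rfl fun k _ => (hG k).symm
      rw [hAeq] at hstepF
      exact DMS.glue F _ hFb L hstepF
    · -- n = 2d, d ≠ 0
      have hG : ∀ k : ℤ, F (2*k) + F (2*k+1)
          = ((ca+cb)*(a+b) + ca*a) + (cb*a) * ((ξ k : ℝ):ℂ)
            + (ca*b) * ((ξ (k+d) : ℝ):ℂ) + (cb*b) * ((ξ k * ξ (k+d) : ℝ):ℂ) := by
        intro k
        rw [hF (2*k), hF (2*k+1), show 2*k + n = 2*(k+d) by omega,
          show 2*k+1+n = 2*(k+d)+1 by omega, hVe, hVe, hVo', hVo']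
        push_cast
        ring
      have hstep := DMS.comb3 ξ (fun k => ξ (k+d)) (fun k => ξ k * ξ (k+d))
        hξavg (hcs d) (hpp d hd0)
        ((ca+cb)*(a+b) + ca*a) (cb*a) (ca*b) (cb*b)
      have hAeq : (ca+cb)*(a+b) + ca*a = 2 * L := by
        have hηn : ηY n = 1/2 := hηYeven n (by omega) ⟨d, hd⟩
        rw [hLval, hηn]
        push_cast
        ring
      have hstepF : Tendsto (fun K : ℕ => (1/(2*(K:ℝ)+1) : ℂ) *
          ∑ k ∈ Finset.Icc (-(K:ℤ)) K, (F (2*k) + F (2*k+1))) atTop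
          (nhds ((ca+cb)*(a+b) + ca*a)) := by
        refine hstep.congr fun K => ?_
        congr 1
        exact Finset.sum_congr rfl fun k _ => (hG k).symm
      rw [hAeq] at hstepF
      exact DMS.glue F _ hFb L hstepF
  · -- n = 2e+1
    have hG : ∀ k : ℤ, F (2*k) + F (2*k+1)
        = ((ca+cb)*a + ca*(a+b)) + (cb*(a+b)) * ((ξ k : ℝ):ℂ)
          + ((ca+cb)*b) * ((ξ (k+e) : ℝ):ℂ) + 0 * ((ξ k : ℝ):ℂ) := by
      intro k
      rw [hF (2*k), hF (2*k+1), show 2*k + n = 2*(k+e)+1 by omega,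
        show 2*k+1+n = 2*(k+e+1) by omega, hVe, hVe, hVo', hVo']
      push_cast
      ring
    have hstep := DMS.comb3 ξ (fun k => ξ (k+e)) ξ hξavg (hcs e) hξavg
      ((ca+cb)*a + ca*(a+b)) (cb*(a+b)) ((ca+cb)*b) 0
    have hAeq : (ca+cb)*a + ca*(a+b) = 2 * L := by
      have hηn : ηY n = 0 := hηYodd n ⟨e, he⟩
      rw [hLval, hηn]
      push_cast
      ring
    have hstepF : Tendsto (fun K : ℕ => (1/(2*(K:ℝ)+1) : ℂ) *
        ∑ k ∈ Finset.Icc (-(K:ℤ)) K, (F (2*k) + F (2*k+1))) atTop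
        (nhds ((ca+cb)*a + ca*(a+b))) := by
      refine hstep.congr fun K => ?_
      congr 1
      exact Finset.sum_congr rfl fun k _ => (hG k).symm
    rw [hAeq] at hstepF
    exact DMS.glue F _ hFb L hstepF

/-- a.s. all coordinates are ±1 -/
lemma DMS.good {Ω : Type*} [MeasurableSpace Ω] (P : Measure Ω) [IsProbabilityMeasure P]
    (ε : ℤ → Ω → ℝ) (hmeas : ∀ k, Measurable (ε k))
    (hdist : ∀ k, P {ω | ε k ω = 1} = 1/2 ∧ P {ω | ε k ω = -1} = 1/2) :
    ∀ᵐ ω ∂P, ∀ k : ℤ, ε k ω = 1 ∨ ε k ω = -1 := by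
  rw [ae_all_iff]
  intro k
  have hA : MeasurableSet {ω | ε k ω = 1} := (hmeas k) (measurableSet_singleton 1)
  have hB : MeasurableSet {ω | ε k ω = -1} := (hmeas k) (measurableSet_singleton (-1))
  have hdisj : Disjoint {ω | ε k ω = 1} {ω | ε k ω = -1} := by
    rw [Set.disjoint_left]
    intro ω h1 h2
    simp only [Set.mem_setOf_eq] at h1 h2
    rw [h1] at h2; norm_num at h2
  have hunion : P ({ω | ε k ω = 1} ∪ {ω | ε k ω = -1}) = 1 := by
    rw [measure_union hdisj hB, (hdist k).1, (hdist k).2]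
    rw [ENNReal.div_add_div_same, one_add_one_eq_two]
    exact ENNReal.div_self (by norm_num) (by norm_num)
  rw [ae_iff]
  have hc : {ω | ¬(ε k ω = 1 ∨ ε k ω = -1)} = ({ω | ε k ω = 1} ∪ {ω | ε k ω = -1})ᶜ := by
    ext ω; simp [not_or]
  rw [hc, measure_compl (hA.union hB) (measure_ne_top _ _), hunion]
  simp

/-- integral of one coordinate is 0 -/
lemma DMS.integral_eps {Ω : Type*} [MeasurableSpace Ω] (P : Measure Ω) [IsProbabilityMeasure P]
    (ε : ℤ → Ω → ℝ) (hmeas : ∀ k, Measurable (ε k))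
    (hdist : ∀ k, P {ω | ε k ω = 1} = 1/2 ∧ P {ω | ε k ω = -1} = 1/2) (k : ℤ) :
    ∫ ω, ε k ω ∂P = 0 := by
  have hgood := DMS.good P ε hmeas hdist
  have hA : MeasurableSet {ω | ε k ω = 1} := (hmeas k) (measurableSet_singleton 1)
  have hB : MeasurableSet {ω | ε k ω = -1} := (hmeas k) (measurableSet_singleton (-1))
  have hae : (fun ω => ε k ω) =ᵐ[P]
      (fun ω => Set.indicator {ω | ε k ω = 1} (fun _ => (1:ℝ)) ω
        - Set.indicator {ω | ε k ω = -1} (fun _ => (1:ℝ)) ω) := by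
    filter_upwards [hgood] with ω hω
    rcases hω k with h1 | h1
    · rw [h1, Set.indicator_of_mem (by simpa using h1), Set.indicator_of_notMem]
      · norm_num
      · simp only [Set.mem_setOf_eq]; rw [h1]; norm_num
    · rw [h1, Set.indicator_of_notMem, Set.indicator_of_mem (by simpa using h1)]
      · norm_num
      · simp only [Set.mem_setOf_eq]; rw [h1]; norm_num
  rw [integral_congr_ae hae, integral_sub
    ((integrable_const (1:ℝ)).indicator hA) ((integrable_const (1:ℝ)).indicator hB)]
  rw [integral_indicator_const _ hA, integral_indicator_const _ hB, measureReal_def, measureReal_def,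
    (hdist k).1, (hdist k).2]
  simp

lemma DMS.prod_pm (f : ℤ → ℝ) (hf : ∀ j, f j = 1 ∨ f j = -1) (s : Finset ℤ) :
    (∏ j ∈ s, f j) = 1 ∨ (∏ j ∈ s, f j) = -1 := by
  classical
  induction s using Finset.induction_on with
  | empty => left; simp
  | insert _ _ hnotmem ih =>
    rw [Finset.prod_insert hnotmem]
    rcases hf _ with h | h <;> rcases ih with h2 | h2 <;> rw [h, h2] <;> norm_num

lemma DMS.prod_mul_prod (f : ℤ → ℝ) (hf : ∀ j, f j = 1 ∨ f j = -1) (s t : Finset ℤ) :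
    (∏ j ∈ s, f j) * (∏ j ∈ t, f j) = ∏ j ∈ s ∆ t, f j := by
  classical
  have hs : (∏ j ∈ s, f j) = (∏ j ∈ s \ t, f j) * (∏ j ∈ s ∩ t, f j) := by
    rw [← Finset.sdiff_inter_self_left s t]
    exact (Finset.prod_sdiff (Finset.inter_subset_left)).symm
  have ht : (∏ j ∈ t, f j) = (∏ j ∈ t \ s, f j) * (∏ j ∈ s ∩ t, f j) := by
    rw [Finset.inter_comm, ← Finset.sdiff_inter_self_left t s]
    exact (Finset.prod_sdiff (Finset.inter_subset_left)).symm
  have hsq : (∏ j ∈ s ∩ t, f j) * (∏ j ∈ s ∩ t, f j) = 1 := by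
    rw [← Finset.prod_mul_distrib]
    refine Finset.prod_eq_one fun j _ => ?_
    rcases hf j with h | h <;> rw [h] <;> norm_num
  have hsd : (∏ j ∈ s ∆ t, f j) = (∏ j ∈ s \ t, f j) * (∏ j ∈ t \ s, f j) := by
    rw [symmDiff_def]
    exact Finset.prod_union disjoint_sdiff_sdiff
  rw [hs, ht, hsd]
  calc (∏ j ∈ s \ t, f j) * (∏ j ∈ s ∩ t, f j) * ((∏ j ∈ t \ s, f j) * (∏ j ∈ s ∩ t, f j))
      = ((∏ j ∈ s \ t, f j) * (∏ j ∈ t \ s, f j)) * ((∏ j ∈ s ∩ t, f j) * (∏ j ∈ s ∩ t, f j)) := by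
        ring
    _ = _ := by rw [hsq, mul_one]

section Prob2
variable {Ω : Type*} [MeasurableSpace Ω] (P : Measure Ω) [IsProbabilityMeasure P]
  (ε : ℤ → Ω → ℝ)

lemma DMS.measurable_prodX (hmeas : ∀ k, Measurable (ε k)) (s : Finset ℤ) :
    Measurable (fun ω => ∏ j ∈ s, ε j ω) :=
  Finset.measurable_prod s fun i _ => hmeas i

lemma DMS.prodX_pm (hmeas : ∀ k, Measurable (ε k))
    (hdist : ∀ k, P {ω | ε k ω = 1} = 1/2 ∧ P {ω | ε k ω = -1} = 1/2) (s : Finset ℤ) :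
    ∀ᵐ ω ∂P, (∏ j ∈ s, ε j ω) = 1 ∨ (∏ j ∈ s, ε j ω) = -1 := by
  filter_upwards [DMS.good P ε hmeas hdist] with ω hω
  exact DMS.prod_pm (fun j => ε j ω) hω s

lemma DMS.integrable_prodX (hmeas : ∀ k, Measurable (ε k))
    (hdist : ∀ k, P {ω | ε k ω = 1} = 1/2 ∧ P {ω | ε k ω = -1} = 1/2) (s : Finset ℤ) :
    Integrable (fun ω => ∏ j ∈ s, ε j ω) P := by
  refine ⟨(DMS.measurable_prodX ε hmeas s).aestronglyMeasurable,
    HasFiniteIntegral.of_bounded (C := 1) ?_⟩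
  filter_upwards [DMS.prodX_pm P ε hmeas hdist s] with ω hω
  rcases hω with h | h <;> rw [h] <;> simp

lemma DMS.integral_prodX (hmeas : ∀ k, Measurable (ε k))
    (hindep : iIndepFun ε P)
    (hdist : ∀ k, P {ω | ε k ω = 1} = 1/2 ∧ P {ω | ε k ω = -1} = 1/2)
    (s : Finset ℤ) (hs : s.Nonempty) :
    ∫ ω, ∏ j ∈ s, ε j ω ∂P = 0 := by
  classical
  obtain ⟨i, hi⟩ := hs
  have hfun : (fun ω => ∏ j ∈ s, ε j ω)
      = (∏ j ∈ s.erase i, ε j) * ε i := by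
    funext ω
    rw [Pi.mul_apply, Finset.prod_apply, Finset.prod_erase_mul _ _ hi]
  have hind : IndepFun (∏ j ∈ s.erase i, ε j) (ε i) P :=
    iIndepFun.indepFun_finsetProd_of_notMem hindep hmeas (Finset.notMem_erase i s)
  have h1 : Integrable (∏ j ∈ s.erase i, ε j) P := by
    have := DMS.integrable_prodX P ε hmeas hdist (s.erase i)
    refine this.congr (Eventually.of_forall fun ω => ?_)
    rw [Finset.prod_apply]
  have h2 : Integrable (ε i) P := by
    have := DMS.integrable_prodX P ε hmeas hdist {i}
    refine this.congr (Eventually.of_forall fun ω => ?_)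
    simp
  rw [hfun, hind.integral_mul_eq_mul_integral h1.aestronglyMeasurable h2.aestronglyMeasurable]
  have : ∫ ω, ε i ω ∂P = 0 := DMS.integral_eps P ε hmeas hdist i
  rw [show integral P (ε i) = ∫ ω, ε i ω ∂P from rfl, this, mul_zero]

lemma DMS.integral_prodX_mul (hmeas : ∀ k, Measurable (ε k))
    (hindep : iIndepFun ε P)
    (hdist : ∀ k, P {ω | ε k ω = 1} = 1/2 ∧ P {ω | ε k ω = -1} = 1/2)
    (s t : Finset ℤ) (hst : s ≠ t) :
    ∫ ω, (∏ j ∈ s, ε j ω) * (∏ j ∈ t, ε j ω) ∂P = 0 := by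
  classical
  have hae : (fun ω => (∏ j ∈ s, ε j ω) * (∏ j ∈ t, ε j ω))
      =ᵐ[P] (fun ω => ∏ j ∈ s ∆ t, ε j ω) := by
    filter_upwards [DMS.good P ε hmeas hdist] with ω hω
    exact DMS.prod_mul_prod (fun j => ε j ω) hω s t
  rw [integral_congr_ae hae]
  exact DMS.integral_prodX P ε hmeas hindep hdist _ (Finset.symmDiff_nonempty.mpr hst)

end Prob2

section P3
variable {Ω : Type*} [MeasurableSpace Ω]

/-- two a.s.-±1-valued, uncorrelated, mean-zero random variables are independent -/
lemma DMS.indep_of_pm (P : Measure Ω) [IsProbabilityMeasure P] (X Y : Ω → ℝ)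
    (hXm : Measurable X) (hYm : Measurable Y)
    (hXpm : ∀ᵐ ω ∂P, X ω = 1 ∨ X ω = -1) (hYpm : ∀ᵐ ω ∂P, Y ω = 1 ∨ Y ω = -1)
    (hIX : Integrable X P) (hIY : Integrable Y P)
    (hIXY : Integrable (fun ω => X ω * Y ω) P)
    (hEX : ∫ ω, X ω ∂P = 0) (hEY : ∫ ω, Y ω ∂P = 0)
    (hEXY : ∫ ω, X ω * Y ω ∂P = 0) :
    IndepFun X Y P := by
  rw [indepFun_iff_integral_comp_mul (hfm := hXm) (hgm := hYm)]
  intro φ ψ hφ hψ hiφ hiψ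
  have hXae : (φ ∘ X) =ᵐ[P] fun ω => (φ 1 + φ (-1))/2 + ((φ 1 - φ (-1))/2) * X ω := by
    filter_upwards [hXpm] with ω hω
    rcases hω with hv | hv <;> simp only [Function.comp_apply, hv] <;> ring
  have hYae : (ψ ∘ Y) =ᵐ[P] fun ω => (ψ 1 + ψ (-1))/2 + ((ψ 1 - ψ (-1))/2) * Y ω := by
    filter_upwards [hYpm] with ω hω
    rcases hω with hv | hv <;> simp only [Function.comp_apply, hv] <;> ring
  set c1 := (φ 1 + φ (-1))/2
  set d1 := (φ 1 - φ (-1))/2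
  set c2 := (ψ 1 + ψ (-1))/2
  set d2 := (ψ 1 - ψ (-1))/2
  have hEφ : integral P (φ ∘ X) = c1 := by
    rw [integral_congr_ae hXae, integral_add (integrable_const _) (hIX.const_mul _),
      integral_const_mul, hEX]
    simp
  have hEψ : integral P (ψ ∘ Y) = c2 := by
    rw [integral_congr_ae hYae, integral_add (integrable_const _) (hIY.const_mul _),
      integral_const_mul, hEY]
    simp
  have hprod : (φ ∘ X * ψ ∘ Y) =ᵐ[P]
      fun ω => c1*c2 + ((c1*d2) * Y ω + ((d1*c2) * X ω + (d1*d2) * (X ω * Y ω))) := by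
    filter_upwards [hXae, hYae] with ω h1 h2
    rw [Pi.mul_apply, h1, h2]
    ring
  have hI3 : Integrable (fun ω => d1*d2 * (X ω * Y ω)) P := hIXY.const_mul _
  have hI2 : Integrable (fun ω => d1*c2 * X ω + d1*d2 * (X ω * Y ω)) P :=
    (hIX.const_mul _).add hI3
  have hI1 : Integrable (fun ω => c1*d2 * Y ω + (d1*c2 * X ω + d1*d2 * (X ω * Y ω))) P :=
    (hIY.const_mul _).add hI2
  rw [integral_congr_ae hprod, hEφ, hEψ, integral_add (integrable_const _) hI1,
    integral_add (hIY.const_mul _) hI2, integral_add (hIX.const_mul _) hI3]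
  simp [integral_const_mul, hEX, hEY, hEXY]

/-- marginal distribution of an a.s. ±1 variable with mean 0 -/
lemma DMS.marg (P : Measure Ω) [IsProbabilityMeasure P] (X : Ω → ℝ)
    (hXm : Measurable X) (hXpm : ∀ᵐ ω ∂P, X ω = 1 ∨ X ω = -1)
    (hIX : Integrable X P) (hEX : ∫ ω, X ω ∂P = 0) :
    P {ω | X ω = 1} = 1/2 ∧ P {ω | X ω = -1} = 1/2 := by
  have hhalf : ENNReal.ofReal (1/2 : ℝ) = 1/2 := by
    rw [ENNReal.ofReal_div_of_pos (by norm_num)]; norm_num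
  have key : ∀ (a : ℝ), (a = 1 ∨ a = -1) → ∀ _ : a*a = 1,
      P {ω | X ω = a} = 1/2 := by
    intro a ha haa
    have hA : MeasurableSet {ω | X ω = a} := hXm (measurableSet_singleton a)
    have hae : Set.indicator {ω | X ω = a} (fun _ => (1:ℝ)) =ᵐ[P]
        fun ω => 1/2 + (a/2) * X ω := by
      filter_upwards [hXpm] with ω hω
      rcases hω with hv | hv <;> rcases ha with ha' | ha' <;>
        simp only [Set.indicator_apply, Set.mem_setOf_eq, hv, ha'] <;> norm_num
    have htor : (P {ω | X ω = a}).toReal = 1/2 := by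
      have h1 : (P {ω | X ω = a}).toReal
          = ∫ ω, Set.indicator {ω | X ω = a} (fun _ => (1:ℝ)) ω ∂P := by
        rw [integral_indicator_const _ hA]; simp [measureReal_def]
      rw [h1, integral_congr_ae hae,
        integral_add (integrable_const _) (hIX.const_mul _), integral_const_mul, hEX]
      simp
    have := ENNReal.ofReal_toReal (measure_ne_top P {ω | X ω = a})
    rw [htor] at this
    rw [← this, hhalf]
  constructor
  · exact key 1 (Or.inl rfl) (by norm_num)
  · exact key (-1) (Or.inr rfl) (by norm_num)

/-- distribution of an a.s. ±1 symmetric variable -/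
lemma DMS.map_pm (P : Measure Ω) [IsProbabilityMeasure P] (X : Ω → ℝ)
    (hXm : Measurable X) (hXpm : ∀ᵐ ω ∂P, X ω = 1 ∨ X ω = -1)
    (h1 : P {ω | X ω = 1} = 1/2) (h2 : P {ω | X ω = -1} = 1/2) :
    Measure.map X P
      = (1/2 : ENNReal) • Measure.dirac (1:ℝ) + (1/2 : ENNReal) • Measure.dirac (-1:ℝ) := by
  classical
  ext s hs
  rw [Measure.map_apply hXm hs]
  have hA : MeasurableSet {ω | X ω = 1} := hXm (measurableSet_singleton 1)
  have hB : MeasurableSet {ω | X ω = -1} := hXm (measurableSet_singleton (-1))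
  have hN : P {ω | ¬(X ω = 1 ∨ X ω = -1)} = 0 := ae_iff.mp hXpm
  have hsplit : P (X ⁻¹' s)
      = P (X ⁻¹' s ∩ ({ω | X ω = 1} ∪ {ω | X ω = -1})) := by
    rw [← measure_inter_add_diff (X ⁻¹' s) (hA.union hB)]
    have : P (X ⁻¹' s \ ({ω | X ω = 1} ∪ {ω | X ω = -1})) = 0 := by
      refine measure_mono_null ?_ hN
      intro ω hω
      simp only [Set.mem_diff, Set.mem_union, Set.mem_setOf_eq] at hω ⊢
      tauto
    rw [this, add_zero]
  have hdisj : Disjoint (X ⁻¹' s ∩ {ω | X ω = 1}) (X ⁻¹' s ∩ {ω | X ω = -1}) := by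
    rw [Set.disjoint_left]
    rintro ω ⟨_, hω1⟩ ⟨_, hω2⟩
    simp only [Set.mem_setOf_eq] at hω1 hω2
    rw [hω1] at hω2; norm_num at hω2
  rw [hsplit, Set.inter_union_distrib_left,
    measure_union hdisj ((hXm hs).inter hB)]
  have hone : X ⁻¹' s ∩ {ω | X ω = 1} = if (1:ℝ) ∈ s then {ω | X ω = 1} else ∅ := by
    by_cases h1s : (1:ℝ) ∈ s
    · rw [if_pos h1s]
      ext ω
      simp only [Set.mem_inter_iff, Set.mem_preimage, Set.mem_setOf_eq]
      exact ⟨fun hh => hh.2, fun hh => ⟨by rw [hh]; exact h1s, hh⟩⟩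
    · rw [if_neg h1s]
      ext ω
      simp only [Set.mem_inter_iff, Set.mem_preimage, Set.mem_setOf_eq, Set.mem_empty_iff_false,
        iff_false, not_and]
      intro hh hc
      rw [hc] at hh
      exact h1s hh
  have hmone : X ⁻¹' s ∩ {ω | X ω = -1} = if (-1:ℝ) ∈ s then {ω | X ω = -1} else ∅ := by
    by_cases h1s : (-1:ℝ) ∈ s
    · rw [if_pos h1s]
      ext ω
      simp only [Set.mem_inter_iff, Set.mem_preimage, Set.mem_setOf_eq]
      exact ⟨fun hh => hh.2, fun hh => ⟨by rw [hh]; exact h1s, hh⟩⟩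
    · rw [if_neg h1s]
      ext ω
      simp only [Set.mem_inter_iff, Set.mem_preimage, Set.mem_setOf_eq, Set.mem_empty_iff_false,
        iff_false, not_and]
      intro hh hc
      rw [hc] at hh
      exact h1s hh
  rw [hone, hmone]
  simp only [Measure.coe_add, Pi.add_apply, Measure.smul_apply, smul_eq_mul,
    Measure.dirac_apply' _ hs]
  by_cases h1s : (1:ℝ) ∈ s <;> by_cases h2s : (-1:ℝ) ∈ s <;>
    simp [h1s, h2s, h1, h2, Set.indicator_apply]

end P3



section Core
variable {Ω : Type*} [MeasurableSpace Ω]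

/-- CORE: symmetric Cesàro averages of shifted products tend to 0 a.s. -/
lemma DMS.core (P : Measure Ω) [IsProbabilityMeasure P] (ε : ℤ → Ω → ℝ)
    (hmeas : ∀ k, Measurable (ε k))
    (hindep : iIndepFun ε P)
    (hdist : ∀ k, P {ω | ε k ω = 1} = 1/2 ∧ P {ω | ε k ω = -1} = 1/2)
    (t : Finset ℤ) (ht : t.Nonempty) :
    ∀ᵐ ω ∂P, Tendsto (fun K : ℕ =>
        (∑ k ∈ Finset.Icc (-(K:ℤ)) K, ∏ j ∈ t, ε (k + j) ω) / (2*(K:ℝ)+1))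
      atTop (nhds 0) := by
  classical
  set S : ℤ → Finset ℤ := fun i => t.image (fun j => i + j) with hS
  have hinj : ∀ i : ℤ, ∀ a ∈ t, ∀ b ∈ t, i + a = i + b → a = b := by
    intro i a _ b _ hab; omega
  have hSprod : ∀ (i : ℤ) (ω : Ω), (∏ j ∈ S i, ε j ω) = ∏ j ∈ t, ε (i + j) ω := by
    intro i ω
    rw [hS]
    exact Finset.prod_image (hinj i)
  have hSne : ∀ i, (S i).Nonempty := fun i => ht.image _
  have hSinj : ∀ i i' : ℤ, S i = S i' → i = i' := by
    intro i i' hii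
    have h1 : ∑ j ∈ S i, j = ∑ j ∈ S i', j := by rw [hii]
    rw [hS] at h1
    simp only [] at h1
    rw [Finset.sum_image (hinj i), Finset.sum_image (hinj i'),
      Finset.sum_add_distrib, Finset.sum_add_distrib, Finset.sum_const, Finset.sum_const] at h1
    have hc : 0 < t.card := Finset.card_pos.mpr ht
    have h2 := add_right_cancel h1
    rw [nsmul_eq_mul, nsmul_eq_mul] at h2
    exact mul_left_cancel₀ (by exact_mod_cast hc.ne' : (t.card : ℤ) ≠ 0) h2
  set Z : ℤ → Ω → ℝ := fun i ω => ∏ j ∈ S i, ε j ω with hZ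
  have hZm : ∀ i, Measurable (Z i) := fun i => DMS.measurable_prodX ε hmeas (S i)
  have hZpm : ∀ i, ∀ᵐ ω ∂P, Z i ω = 1 ∨ Z i ω = -1 := fun i =>
    DMS.prodX_pm P ε hmeas hdist (S i)
  have hZint : ∀ i, Integrable (Z i) P := fun i => DMS.integrable_prodX P ε hmeas hdist (S i)
  have hZE : ∀ i, ∫ ω, Z i ω ∂P = 0 := fun i =>
    DMS.integral_prodX P ε hmeas hindep hdist (S i) (hSne i)
  have hZindep : ∀ i i' : ℤ, i ≠ i' → IndepFun (Z i) (Z i') P := by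
    intro i i' hii
    have hne : S i ≠ S i' := fun hcon => hii (hSinj i i' hcon)
    refine DMS.indep_of_pm P (Z i) (Z i') (hZm i) (hZm i') (hZpm i) (hZpm i')
      (hZint i) (hZint i') ?_ (hZE i) (hZE i')
      (DMS.integral_prodX_mul P ε hmeas hindep hdist (S i) (S i') hne)
    refine ⟨((hZm i).mul (hZm i')).aestronglyMeasurable,
      HasFiniteIntegral.of_bounded (C := 1) ?_⟩
    filter_upwards [hZpm i, hZpm i'] with ω h1 h2
    rcases h1 with h1 | h1 <;> rcases h2 with h2 | h2 <;> rw [h1, h2] <;> norm_num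
  have hZmap : ∀ i, Measure.map (Z i) P
      = (1/2 : ENNReal) • Measure.dirac (1:ℝ) + (1/2 : ENNReal) • Measure.dirac (-1:ℝ) := by
    intro i
    obtain ⟨hm1, hm2⟩ := DMS.marg P (Z i) (hZm i) (hZpm i) (hZint i) (hZE i)
    exact DMS.map_pm P (Z i) (hZm i) (hZpm i) hm1 hm2
  have hident : ∀ i i' : ℤ, IdentDistrib (Z i) (Z i') P P := fun i i' =>
    ⟨(hZm i).aemeasurable, (hZm i').aemeasurable, by rw [hZmap i, hZmap i']⟩
  -- forward SLLN
  have hfwd := strong_law_ae_real (fun n : ℕ => Z (n : ℤ)) (hZint _)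
    (fun i j hij => hZindep _ _ (by exact_mod_cast hij))
    (fun i => hident _ _)
  rw [hZE] at hfwd
  -- backward SLLN
  have hbwd := strong_law_ae_real (fun n : ℕ => Z (-1 - (n : ℤ))) (hZint _)
    (fun i j hij => hZindep _ _ (by intro hc; exact hij (by exact_mod_cast (by omega : (i:ℤ) = j))))
    (fun i => hident _ _)
  rw [hZE] at hbwd
  filter_upwards [hfwd, hbwd] with ω h1 h2
  -- rewrite target sums in terms of Z
  have hsplit : ∀ K : ℕ, ∑ k ∈ Finset.Icc (-(K:ℤ)) K, Z k ω
      = (∑ i ∈ Finset.range (K+1), Z ((i:ℕ):ℤ) ω) + (∑ i ∈ Finset.range K, Z (-1 - (i:ℤ)) ω) := by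
    intro K
    have hre1 : ∑ i ∈ Finset.range (K+1), Z ((i:ℕ):ℤ) ω = ∑ k ∈ Finset.Icc (0:ℤ) K, Z k ω := by
      refine Finset.sum_nbij' (fun i => (i:ℤ)) (fun m => m.toNat) ?_ ?_ ?_ ?_ ?_
      · intro a ha; simp only [Finset.mem_range] at ha; simp only [Finset.mem_Icc]; omega
      · intro a ha; simp only [Finset.mem_Icc] at ha; simp only [Finset.mem_range]; omega
      · intro a _; omega
      · intro a ha; simp only [Finset.mem_Icc] at ha; omega
      · intro a _; rfl
    have hre2 : ∑ i ∈ Finset.range K, Z (-1 - (i:ℤ)) ω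
        = ∑ k ∈ Finset.Icc (-(K:ℤ)) (-1), Z k ω := by
      refine Finset.sum_nbij' (fun i => -1 - (i:ℤ)) (fun m => (-1 - m).toNat) ?_ ?_ ?_ ?_ ?_
      · intro a ha; simp only [Finset.mem_range] at ha; simp only [Finset.mem_Icc]; omega
      · intro a ha; simp only [Finset.mem_Icc] at ha; simp only [Finset.mem_range]; omega
      · intro a _; omega
      · intro a ha; simp only [Finset.mem_Icc] at ha; omega
      · intro a _; rfl
    rw [hre1, hre2]
    rw [← Finset.sum_union]
    · apply Finset.sum_congr _ (fun _ _ => rfl)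
      ext m
      simp only [Finset.mem_Icc, Finset.mem_union]
      omega
    · simp only [Finset.disjoint_left, Finset.mem_Icc]
      intro m hm1 hm2
      omega
  have hT1 : Tendsto (fun K : ℕ =>
      (∑ i ∈ Finset.range (K+1), Z ((i:ℕ):ℤ) ω) / (2*(K:ℝ)+1)) atTop (nhds 0) := by
    apply squeeze_zero_norm
      (a := fun K : ℕ => |(∑ i ∈ Finset.range (K+1), Z ((i:ℕ):ℤ) ω) / ((K:ℝ)+1)|)
    · intro K
      rw [Real.norm_eq_abs, abs_div, abs_div]
      rw [abs_of_pos (by positivity : (0:ℝ) < 2*(K:ℝ)+1),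
        abs_of_pos (by positivity : (0:ℝ) < (K:ℝ)+1)]
      exact div_le_div_of_nonneg_left (abs_nonneg _) (by positivity) (by linarith)
    · have hcomp : Tendsto (fun K : ℕ =>
          (∑ i ∈ Finset.range (K+1), Z ((i:ℕ):ℤ) ω) / (((K+1 : ℕ)):ℝ)) atTop (nhds 0) := by
        have := h1.comp (tendsto_add_atTop_nat 1)
        exact this
      have : Tendsto (fun K : ℕ =>
          |(∑ i ∈ Finset.range (K+1), Z ((i:ℕ):ℤ) ω) / (((K+1 : ℕ)):ℝ)|) atTop (nhds 0) := by
        have habs := hcomp.abs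
        rwa [abs_zero] at habs
      refine this.congr fun K => ?_
      congr 1
      push_cast
      ring
  have hT2 : Tendsto (fun K : ℕ =>
      (∑ i ∈ Finset.range K, Z (-1 - (i:ℤ)) ω) / (2*(K:ℝ)+1)) atTop (nhds 0) := by
    apply squeeze_zero_norm
      (a := fun K : ℕ => |(∑ i ∈ Finset.range K, Z (-1 - (i:ℤ)) ω) / (K:ℝ)|)
    · intro K
      rcases Nat.eq_zero_or_pos K with hK | hK
      · subst hK; simp
      · rw [Real.norm_eq_abs, abs_div, abs_div]
        rw [abs_of_pos (by positivity : (0:ℝ) < 2*(K:ℝ)+1),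
          abs_of_pos (by exact_mod_cast hK : (0:ℝ) < (K:ℝ))]
        exact div_le_div_of_nonneg_left (abs_nonneg _) (by exact_mod_cast hK) (by linarith)
    · have habs := h2.abs
      rwa [abs_zero] at habs
  have := hT1.add hT2
  rw [add_zero] at this
  refine Tendsto.congr (fun K => ?_) this
  rw [← add_div, ← hsplit K]
  congr 1
  exact Finset.sum_congr rfl fun k _ => hSprod k ω

end Core



/-- For the factor sequence `v n = - w n · w (n+1)` of the DMS with
general complex weights `h₊, h₋` (applied to the values ±1), almost surely, for every
`n : ℤ`, the averaged correlation sums converge to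
`(|h₊+h₋|² + |h₊|² - |h₋|²)/4 + (|h₊-h₋|²/4)·η_Y n`. -/
theorem dms_factor_autocorrelation_general_weights
    {Ω : Type*} [MeasurableSpace Ω] (P : Measure Ω) [IsProbabilityMeasure P]
    (ε : ℤ → Ω → ℝ) (hmeas : ∀ k, Measurable (ε k))
    (hindep : iIndepFun ε P)
    (hdist : ∀ k, P {ω | ε k ω = 1} = 1/2 ∧ P {ω | ε k ω = -1} = 1/2)
    (w : ℤ → Ω → ℝ)
    (hw_even : ∀ k ω, w (2*k) ω = ε k ω)
    (hw_odd : ∀ k ω, w (2*k+1) ω = - ε k ω)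
    (v : ℤ → Ω → ℝ)
    (hv : ∀ n ω, v n ω = - (w n ω * w (n+1) ω))
    (hp hm : ℂ) (h : ℝ → ℂ) (hh1 : h 1 = hp) (hhm1 : h (-1) = hm)
    (ηY : ℤ → ℝ)
    (hηY0 : ηY 0 = 1)
    (hηYeven : ∀ n : ℤ, n ≠ 0 → Even n → ηY n = 1/2)
    (hηYodd : ∀ n : ℤ, Odd n → ηY n = 0) :
    ∀ᵐ ω ∂P, ∀ n : ℤ,
      Tendsto (fun N : ℕ =>
          (1 / (2*(N:ℝ)+1) : ℂ) *
            ∑ m ∈ Finset.Icc (-(N:ℤ)) (N:ℤ),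
              (starRingEnd ℂ) (h (v m ω)) * h (v (m+n) ω))
        atTop
        (nhds ((((‖hp + hm‖)^2 + (‖hp‖)^2
            - (‖hm‖)^2) / 4 : ℂ)
          + ((‖hp - hm‖)^2 / 4) * (ηY n : ℂ))) := by
  have hgood := DMS.good P ε hmeas hdist
  have hcore : ∀ᵐ ω ∂P, ∀ t : Finset ℤ, t.Nonempty →
      Tendsto (fun K : ℕ =>
        (∑ k ∈ Finset.Icc (-(K:ℤ)) K, ∏ j ∈ t, ε (k + j) ω) / (2*(K:ℝ)+1))
      atTop (nhds 0) := by
    rw [ae_all_iff]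
    intro t
    by_cases ht : t.Nonempty
    · filter_upwards [DMS.core P ε hmeas hindep hdist t ht] with ω hω _
      exact hω
    · filter_upwards with ω hcon
      exact absurd hcon ht
  filter_upwards [hgood, hcore] with ω hx hc
  intro n
  have hVe : ∀ k : ℤ, v (2*k) ω = 1 := by
    intro k
    rw [hv, hw_even k, hw_odd k]
    rcases hx k with h1 | h1 <;> rw [h1] <;> norm_num
  have hVo : ∀ k : ℤ, v (2*k+1) ω = ε k ω * ε (k+1) ω := by
    intro k
    rw [hv, hw_odd k, show 2*k+1+1 = 2*(k+1) by ring, hw_even (k+1)]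
    ring
  exact DMS.det_main (fun k => ε k ω) hx (fun t ht => hc t ht)
    (fun m => v m ω) hVe hVo hp hm h hh1 hhm1 ηY hηY0 hηYeven hηYodd n
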